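/- arXiv:1801.08035 — 4 statements merged into one kernel-verified Lean document; each statement's English description precedes it below -/
import Mathlib

section
/- If the set of exponents Λ admits an integral basis G (i.e., every λ_j is a finite ℤ-linear combination of elements of G), then A₁ *∼ A₂ if and only if there exists a single real vector x₀ such that b_j = a_j·exp(i⟨r_j, x₀⟩) for every j ≥ 1. -/
noncomputable section

open Complex

lemma circle_coe_zpow (z : Circle) (n : ℤ) : ((z ^ n : Circle) : ℂ) = (z : ℂ) ^ n := by
  rcases n with n | n
  · simpa using map_pow Circle.coeHom z n
  · simp only [zpow_negSucc, Circle.coe_inv]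
    rw [show ((z ^ (n+1) : Circle) : ℂ) = (z:ℂ)^(n+1) from by simpa using map_pow Circle.coeHom z (n+1)]

lemma key_prod {ι : Type*} (r : ι →₀ ℤ) (y : ι → ℝ) :
    ((r.prod fun k c => (AddCircle.toCircle ((y k : ℝ) : AddCircle (2*Real.pi))) ^ c : Circle) : ℂ)
      = Complex.exp (Complex.I * ((r.sum fun k c => (c : ℝ) * y k) : ℝ)) := by
  have h2pi : (2 : ℝ) * Real.pi ≠ 0 := by positivity
  rw [Finsupp.prod, Finsupp.sum]
  rw [show ((∏ k ∈ r.support, (AddCircle.toCircle ((y k : ℝ) : AddCircle (2*Real.pi))) ^ r k : Circle) : ℂ) = ∏ k ∈ r.support, (((AddCircle.toCircle ((y k : ℝ) : AddCircle (2*Real.pi))) ^ r k : Circle) : ℂ) from map_prod Circle.coeHom _ _]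
  simp only [Circle.coeHom_apply, circle_coe_zpow, AddCircle.toCircle_apply_mk,
    div_self h2pi, one_mul, Circle.coe_exp]
  push_cast
  rw [Finset.mul_sum, Complex.exp_sum]
  refine Finset.prod_congr rfl fun k _ => ?_
  rw [← Complex.exp_int_mul]
  ring_nf

/-- If the set of exponents `Λ = {λ₀, λ₁, …}` admits an integral basis `g`
(each `λⱼ` is a finite `ℤ`-linear combination of the `g k`, with coordinate
vector `rⱼ`), then `A₁ *∼ A₂` (i.e. for each `n` there is `xₙ` with
`bⱼ = aⱼ exp(i⟨rⱼ, xₙ⟩)` for `j ≤ n`) iff there is a single vector `x₀` with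
`bⱼ = aⱼ exp(i⟨rⱼ, x₀⟩)` for every `j`. -/
theorem seriesEquiv_integralBasis_iff {ι : Type*} (lam : ℕ → ℝ)
    (hinj : Function.Injective lam)
    (g : ι → ℝ) (hg : LinearIndependent ℚ g)
    (r : ℕ → ι →₀ ℤ) (hr : ∀ j, lam j = (r j).sum fun k c => (c : ℝ) * g k)
    (a b : ℕ → ℂ) :
    (∀ n : ℕ, ∃ x : ι → ℝ, ∀ j ≤ n,
        b j = a j * Complex.exp (Complex.I *
          (((r j).sum fun k c => (c : ℝ) * x k) : ℝ))) ↔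
      (∃ x : ι → ℝ, ∀ j : ℕ,
        b j = a j * Complex.exp (Complex.I *
          (((r j).sum fun k c => (c : ℝ) * x k) : ℝ))) := by
  constructor
  · intro h
    haveI : Fact (0 < 2 * Real.pi) := ⟨by positivity⟩
    set T := ι → AddCircle (2 * Real.pi) with hT
    set F : ℕ → T → ℂ := fun j x =>
      (((r j).prod fun k c => (AddCircle.toCircle (x k)) ^ c : Circle) : ℂ) with hF
    have hFcont : ∀ j, Continuous (F j) := by
      intro j
      apply Continuous.comp continuous_subtype_val
      exact continuous_finset_prod (M := Circle) _ fun k _ =>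
        ((AddCircle.continuous_toCircle).comp (continuous_apply k)).zpow _
    set S : ℕ → Set T := fun n => {x | ∀ j ≤ n, b j = a j * F j x} with hS
    have hclosed : ∀ n, IsClosed (S n) := by
      intro n
      have : S n = ⋂ j, ⋂ (_ : j ≤ n), {x : T | b j = a j * F j x} := by
        ext x; simp [hS]
      rw [this]
      exact isClosed_iInter fun j => isClosed_iInter fun _ =>
        isClosed_eq continuous_const (continuous_const.mul (hFcont j))
    have hne : ∀ n, (S n).Nonempty := by
      intro n
      obtain ⟨x, hx⟩ := h n
      refine ⟨fun k => ((x k : ℝ) : AddCircle (2 * Real.pi)), fun j hj => ?_⟩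
      rw [hx j hj, hF]
      simp only
      rw [key_prod]
    have hsub : ∀ n, S (n + 1) ⊆ S n := fun n x hx j hj => hx j (hj.trans (Nat.le_succ n))
    obtain ⟨x, hx⟩ := IsCompact.nonempty_iInter_of_sequence_nonempty_isCompact_isClosed
      S hsub hne ((hclosed 0).isCompact) hclosed
    have hsurj : ∀ k, ∃ y : ℝ, ((y : ℝ) : AddCircle (2 * Real.pi)) = x k :=
      fun k => QuotientAddGroup.mk_surjective (x k)
    choose y hy using hsurj
    refine ⟨y, fun j => ?_⟩
    have hxj : x ∈ S j := Set.mem_iInter.1 hx j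
    have := hxj j le_rfl
    rw [this]
    have hxy : x = fun k => ((y k : ℝ) : AddCircle (2 * Real.pi)) := by
      funext k; rw [hy k]
    rw [hxy, hF]
    simp only
    rw [key_prod]
  · intro ⟨x, hx⟩ n
    exact ⟨x, fun j _ => hx j⟩
end
end

section
/- Let f₁(s) = Σ_{j=1}^n a_j e^{λ_j s} and f₂(s) = Σ_{j=1}^n b_j e^{λ_j s} be equivalent exponential polynomials with distinct real exponents λ_j. Then for any σ₀ < σ₁ and any ε > 0, there exists a relatively dense set of real numbers τ such that |f₁(s + iτ) − f₂(s)| < ε for every s in the strip {σ + it : σ₀ ≤ σ ≤ σ₁}. -/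
noncomputable section
open Complex Finset

namespace BohrAux

variable {m p : ℕ}

def cnt (g : Fin p → Fin m) (k : Fin m) : ℕ := (univ.filter fun i => g i = k).card

lemma sum_comp_cnt (g : Fin p → Fin m) (v : Fin m → ℝ) :
    ∑ i, v (g i) = ∑ k, (cnt g k : ℝ) * v k := by
  rw [← Finset.sum_fiberwise_of_maps_to (fun i (_ : i ∈ univ) => mem_univ (g i))
    (fun i => v (g i))]
  refine Finset.sum_congr rfl fun k _ => ?_
  rw [Finset.sum_congr rfl (fun i hi => by rw [(mem_filter.mp hi).2]), Finset.sum_const, cnt,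
    nsmul_eq_mul]

lemma count_sum_ge (m p : ℕ) :
    ((m : ℝ)) ^ (2 * p) ≤ ((p:ℝ) + 1) ^ m *
      ∑ g : Fin p → Fin m, ∑ h : Fin p → Fin m, (if cnt g = cnt h then (1:ℝ) else 0) := by
  classical
  set t := (univ : Finset (Fin p → Fin m)).image cnt with ht
  set N : (Fin m → ℕ) → ℕ := fun c => ((univ : Finset (Fin p → Fin m)).filter
    fun g => cnt g = c).card with hN
  have hsum : ∑ g : Fin p → Fin m, ∑ h : Fin p → Fin m, (if cnt g = cnt h then (1:ℝ) else 0)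
      = ∑ c ∈ t, ((N c : ℝ))^2 := by
    have h1 : ∀ g : Fin p → Fin m,
        (∑ h : Fin p → Fin m, (if cnt g = cnt h then (1:ℝ) else 0)) = (N (cnt g) : ℝ) := by
      intro g
      rw [Finset.sum_boole, hN]
      congr 1
      show (filter (fun h => cnt g = cnt h) univ).card = (filter (fun h => cnt h = cnt g) univ).card
      exact congrArg Finset.card (Finset.filter_congr (fun h _ => eq_comm))
    simp_rw [h1]
    rw [← Finset.sum_fiberwise_of_maps_to (g := cnt)
      (fun g (_ : g ∈ univ) => mem_image_of_mem cnt (mem_univ g)) (fun g => (N (cnt g) : ℝ))]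
    refine Finset.sum_congr rfl fun c hc => ?_
    rw [Finset.sum_congr rfl (fun g hg => by rw [(mem_filter.mp hg).2]), Finset.sum_const,
      nsmul_eq_mul, sq]
  have hcardsum : ∑ c ∈ t, N c = m ^ p := by
    rw [hN, ← Finset.card_eq_sum_card_fiberwise (fun g (_ : g ∈ univ) =>
      mem_image_of_mem cnt (mem_univ g))]
    simp
  have htcard : (t.card : ℝ) ≤ ((p:ℝ)+1) ^ m := by
    have hinj : ∀ c ∈ t, ∀ k, c k ≤ p := by
      intro c hc k
      obtain ⟨g, -, rfl⟩ := Finset.mem_image.mp hc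
      calc cnt g k ≤ (univ : Finset (Fin p)).card := Finset.card_filter_le _ _
        _ = p := by simp
    have : t.card ≤ (univ : Finset (Fin m → Fin (p+1))).card := by
      apply Finset.card_le_card_of_injOn (fun c k => (⟨min (c k) p, by omega⟩ : Fin (p+1)))
        (fun _ _ => mem_univ _)
      intro c hc c' hc' hcc
      funext k
      have h1 := hinj c hc k
      have h2 := hinj c' hc' k
      have := congrFun hcc k
      simp only [Fin.mk.injEq] at this
      omega
    calc (t.card : ℝ) ≤ ((univ : Finset (Fin m → Fin (p+1))).card : ℝ) := by exact_mod_cast this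
      _ = ((p:ℝ)+1) ^ m := by
        rw [Finset.card_univ, Fintype.card_fun]
        push_cast [Fintype.card_fin]
        ring
  have hCS : ((∑ c ∈ t, N c : ℕ) : ℝ)^2 ≤ (t.card : ℝ) * ∑ c ∈ t, ((N c : ℝ))^2 := by
    push_cast
    exact_mod_cast sq_sum_le_card_mul_sum_sq (f := fun c => (N c : ℝ))
  rw [hsum]
  have hnn : (0:ℝ) ≤ ∑ c ∈ t, ((N c : ℝ))^2 := Finset.sum_nonneg fun c _ => sq_nonneg _
  calc ((m:ℝ)) ^ (2*p) = (((m:ℝ))^p)^2 := by rw [← pow_mul, mul_comm]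
    _ = ((∑ c ∈ t, N c : ℕ) : ℝ)^2 := by rw [hcardsum]; push_cast; ring
    _ ≤ (t.card : ℝ) * ∑ c ∈ t, ((N c : ℝ))^2 := hCS
    _ ≤ ((p:ℝ)+1) ^ m * ∑ c ∈ t, ((N c : ℝ))^2 := by
        exact mul_le_mul_of_nonneg_right htcard hnn

set_option maxHeartbeats 1600000 in
lemma kron {n : ℕ} (lam θ : Fin n → ℝ)
    (hc : ∀ d : Fin n → ℤ, (∑ j, (d j : ℝ) * lam j) = 0 → (∑ j, (d j : ℝ) * θ j) = 0)
    {δ : ℝ} (hδ : 0 < δ) :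
    ∃ τ : ℝ, ∀ j, ‖Complex.exp (Complex.I * ((lam j * τ : ℝ) : ℂ)) -
      Complex.exp (Complex.I * ((θ j : ℝ) : ℂ))‖ < δ := by
  classical
  set m : ℕ := n + 1 with hm
  set μ : Fin m → ℝ := Fin.cons 0 lam with hμ
  set w : Fin m → ℝ := Fin.cons 0 θ with hw
  set η : ℝ := min (δ^2/4) 2⁻¹ with hη
  have hη0 : 0 < η := lt_min (by positivity) (by norm_num)
  have hη2 : η ≤ 2⁻¹ := min_le_right _ _
  have hη4 : 4 * η ≤ δ^2 := by
    have := min_le_left (δ^2/4) 2⁻¹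
    rw [hη] at *
    nlinarith [this]
  have hm1 : (1:ℝ) ≤ (m:ℝ) := by exact_mod_cast Nat.one_le_iff_ne_zero.mpr (by omega)
  have hmη : (0:ℝ) < (m:ℝ) - η := by nlinarith
  have hmη' : (m:ℝ) - η < m := by linarith
  set r : ℝ := ((m:ℝ)/((m:ℝ)-η))^2 with hr
  have hr1 : 1 < r := by
    rw [hr]
    have h1 : 1 < (m:ℝ)/((m:ℝ)-η) := (one_lt_div hmη).mpr hmη'
    nlinarith
  -- Step A: choose p
  obtain ⟨p, hp⟩ : ∃ p : ℕ, 2 * ((p:ℝ)+1)^m ≤ r^p := by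
    have h0 : Filter.Tendsto (fun k:ℕ => ((k:ℝ))^m / r^k) Filter.atTop (nhds 0) :=
      tendsto_pow_const_div_const_pow_of_one_lt m hr1
    have h1 : Filter.Tendsto (fun k:ℕ => (((k+1:ℕ):ℝ))^m / r^(k+1)) Filter.atTop (nhds 0) :=
      h0.comp (Filter.tendsto_add_atTop_nat 1)
    have h2 : Filter.Tendsto (fun k:ℕ => r * ((((k+1:ℕ):ℝ))^m / r^(k+1))) Filter.atTop
        (nhds 0) := by simpa using h1.const_mul r
    have h3 := h2.eventually (gt_mem_nhds (show (0:ℝ) < 2⁻¹ by norm_num))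
    obtain ⟨p, hp⟩ := h3.exists
    refine ⟨p, ?_⟩
    have hrp : (0:ℝ) < r^p := pow_pos (by linarith) p
    have hr0 : (0:ℝ) < r := by linarith
    have : r * ((((p+1:ℕ):ℝ))^m / r^(p+1)) = ((p:ℝ)+1)^m / r^p := by
      rw [pow_succ]
      push_cast
      field_simp
      ring
    rw [this] at hp
    rw [div_lt_iff₀ hrp] at hp
    nlinarith
  -- the exponential terms
  set z : Fin m → ℝ → ℂ := fun k τ => Complex.exp (Complex.I * ((μ k * τ : ℝ) - (w k : ℝ) : ℂ))
    with hz
  set f : ℝ → ℂ := fun τ => ∑ k, z k τ with hf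
  set S : (Fin p → Fin m) → ℝ := fun g => ∑ i, μ (g i) with hS
  set W : (Fin p → Fin m) → ℝ := fun g => ∑ i, w (g i) with hW
  have hnormz : ∀ k τ, ‖z k τ‖ = 1 := by
    intro k τ
    rw [hz]
    simp [Complex.norm_exp]
  have hSc : ∀ g : Fin p → Fin m, S g = ∑ k, (cnt g k : ℝ) * μ k := fun g => sum_comp_cnt g μ
  have hWc : ∀ g : Fin p → Fin m, W g = ∑ k, (cnt g k : ℝ) * w k := fun g => sum_comp_cnt g w
  have hzero : ∀ g h : Fin p → Fin m, S g - S h = 0 → W g - W h = 0 := by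
    intro g h h0
    set d : Fin n → ℤ := fun j => (cnt g j.succ : ℤ) - (cnt h j.succ : ℤ) with hd
    have key : ∀ v : Fin n → ℝ, (∑ k, (cnt g k : ℝ) * (Fin.cons 0 v : Fin m → ℝ) k) -
        (∑ k, (cnt h k : ℝ) * (Fin.cons 0 v : Fin m → ℝ) k) = ∑ j, (d j : ℝ) * v j := by
      intro v
      rw [Fin.sum_univ_succ, Fin.sum_univ_succ]
      simp only [Fin.cons_zero, Fin.cons_succ, mul_zero, zero_add]
      rw [← Finset.sum_sub_distrib]
      refine Finset.sum_congr rfl fun j _ => ?_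
      rw [hd]
      push_cast
      ring
    have h1 : ∑ j, (d j : ℝ) * lam j = 0 := by
      rw [← key lam]
      rw [hSc, hSc] at h0
      exact h0
    have h2 := hc d h1
    rw [← key θ] at h2
    rw [hWc, hWc]
    exact h2
  -- pointwise expansion
  have hprod : ∀ (g : Fin p → Fin m) (τ : ℝ), (∏ i, z (g i) τ) =
      Complex.exp (Complex.I * ((S g * τ : ℝ) - (W g : ℝ) : ℂ)) := by
    intro g τ
    rw [← Complex.exp_sum]
    congr 1
    rw [hS, hW]
    push_cast
    rw [Finset.sum_mul, ← Finset.sum_sub_distrib, Finset.mul_sum]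
  have hprodc : ∀ (g : Fin p → Fin m) (τ : ℝ), (∏ i, (starRingEnd ℂ) (z (g i) τ)) =
      Complex.exp (-(Complex.I * ((S g * τ : ℝ) - (W g : ℝ) : ℂ))) := by
    intro g τ
    rw [← map_prod, hprod]
    rw [← Complex.exp_conj]
    congr 1
    simp
  have hpt : ∀ τ : ℝ, ((‖f τ‖ ^ (2*p) : ℝ) : ℂ) =
      ∑ g : Fin p → Fin m, ∑ h : Fin p → Fin m,
        Complex.exp (Complex.I * (((S g - S h) * τ : ℝ) - ((W g - W h : ℝ)) : ℂ)) := by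
    intro τ
    have e1 : ((‖f τ‖ ^ (2*p) : ℝ) : ℂ) = (f τ)^p * ((starRingEnd ℂ) (f τ))^p := by
      rw [pow_mul, Complex.ofReal_pow, ← mul_pow]
      congr 1
      simp [Complex.mul_conj, Complex.normSq_eq_norm_sq]
    calc ((‖f τ‖ ^ (2*p) : ℝ) : ℂ) = (f τ)^p * ((starRingEnd ℂ) (f τ))^p := e1
      _ = (∑ g : Fin p → Fin m, ∏ i, z (g i) τ) *
          (∑ h : Fin p → Fin m, ∏ i, (starRingEnd ℂ) (z (h i) τ)) := by
          rw [hf]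
          simp only [map_sum]
          rw [Finset.sum_pow' univ (fun k => z k τ) p,
            Finset.sum_pow' univ (fun k => (starRingEnd ℂ) (z k τ)) p,
            Fintype.piFinset_univ]
      _ = ∑ g : Fin p → Fin m, ∑ h : Fin p → Fin m,
          Complex.exp (Complex.I * (((S g - S h) * τ : ℝ) - ((W g - W h : ℝ)) : ℂ)) := by
          rw [Finset.sum_mul_sum]
          refine Finset.sum_congr rfl fun g _ => Finset.sum_congr rfl fun h _ => ?_
          rw [hprod, hprodc, ← Complex.exp_add]
          congr 1
          push_cast
          ring
  -- constants
  set q : ℝ := ((m:ℝ) - η)^(2*p) with hq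
  have hq0 : 0 < q := pow_pos hmη _
  set C : ℝ := ∑ g : Fin p → Fin m, ∑ h : Fin p → Fin m,
    (if S g - S h = 0 then (0:ℝ) else 2 / |S g - S h|) with hC
  have hC0 : 0 ≤ C := Finset.sum_nonneg fun g _ => Finset.sum_nonneg fun h _ => by
    split <;> positivity
  set T : ℝ := (C+1)/q with hT
  have hT0 : 0 < T := by positivity
  have hTq : T * q = C + 1 := by rw [hT]; field_simp
  have hne1 : ∀ ζ : ℂ, ζ.re = 0 → ‖Complex.exp ζ‖ = 1 := fun ζ h => by
    rw [Complex.norm_exp, h, Real.exp_zero]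
  have hcontf : Continuous f := by
    rw [hf]
    refine continuous_finset_sum _ fun k _ => ?_
    rw [hz]
    fun_prop
  have hcont_t : ∀ g h : Fin p → Fin m, Continuous (fun τ : ℝ =>
      Complex.exp (Complex.I * ((((S g - S h) * τ : ℝ) : ℂ) - ((W g - W h : ℝ) : ℂ)))) := by
    intro g h
    fun_prop
  -- the integral identity
  have hIint : (∫ τ in (0:ℝ)..T, ‖f τ‖^(2*p)) = ∑ g : Fin p → Fin m, ∑ h : Fin p → Fin m,
      (∫ τ in (0:ℝ)..T, Complex.exp (Complex.I *
        ((((S g - S h) * τ : ℝ) : ℂ) - ((W g - W h : ℝ) : ℂ)))).re := by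
    have h1 : ((∫ τ in (0:ℝ)..T, ‖f τ‖^(2*p) : ℝ) : ℂ) =
        ∑ g : Fin p → Fin m, ∑ h : Fin p → Fin m, (∫ τ in (0:ℝ)..T, Complex.exp (Complex.I *
          ((((S g - S h) * τ : ℝ) : ℂ) - ((W g - W h : ℝ) : ℂ)))) := by
      rw [← intervalIntegral.integral_ofReal, intervalIntegral.integral_congr
        (fun τ _ => hpt τ), intervalIntegral.integral_finset_sum (fun g _ =>
          (continuous_finset_sum _ fun h _ => hcont_t g h).intervalIntegrable _ _)]
      exact Finset.sum_congr rfl fun g _ => intervalIntegral.integral_finset_sum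
        (fun h _ => (hcont_t g h).intervalIntegrable _ _)
    have h2 := congrArg Complex.re h1
    rwa [Complex.ofReal_re, Complex.re_sum, Finset.sum_congr rfl
      (fun g _ => Complex.re_sum _ _)] at h2
  -- lower bound for each term
  have hcnt_imp : ∀ g h : Fin p → Fin m, cnt g = cnt h → S g - S h = 0 := by
    intro g h hgh
    rw [hSc, hSc, hgh]
    ring
  have hterm : ∀ g h : Fin p → Fin m,
      (if cnt g = cnt h then T else 0) - (if S g - S h = 0 then (0:ℝ) else 2 / |S g - S h|)
      ≤ (∫ τ in (0:ℝ)..T, Complex.exp (Complex.I *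
        ((((S g - S h) * τ : ℝ) : ℂ) - ((W g - W h : ℝ) : ℂ)))).re := by
    intro g h
    by_cases h0 : S g - S h = 0
    · have hb := hzero g h h0
      have hone : ∀ τ ∈ Set.uIcc (0:ℝ) T, Complex.exp (Complex.I *
          ((((S g - S h) * τ : ℝ) : ℂ) - ((W g - W h : ℝ) : ℂ))) = 1 := by
        intro τ _
        rw [h0, hb]
        norm_num
      rw [intervalIntegral.integral_congr hone, intervalIntegral.integral_const, if_pos h0,
        sub_zero]
      have hval : (((T:ℝ) - 0) • (1:ℂ)).re = T := by simp
      rw [hval]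
      split
      · exact le_refl T
      · exact hT0.le
    · have hgh : ¬ (cnt g = cnt h) := fun hcc => h0 (hcnt_imp g h hcc)
      rw [if_neg hgh, if_neg h0]
      set aR : ℝ := S g - S h with haR
      set bR : ℝ := W g - W h with hbR
      have hIa : Complex.I * (aR : ℂ) ≠ 0 :=
        mul_ne_zero Complex.I_ne_zero (Complex.ofReal_ne_zero.mpr h0)
      have hfun : ∀ τ ∈ Set.uIcc (0:ℝ) T, Complex.exp (Complex.I *
          (((aR * τ : ℝ) : ℂ) - ((bR : ℝ) : ℂ))) =
          Complex.exp (-(Complex.I * (bR:ℂ))) * Complex.exp ((Complex.I * (aR:ℂ)) * τ) := by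
        intro τ _
        rw [← Complex.exp_add]
        congr 1
        push_cast
        ring
      rw [intervalIntegral.integral_congr hfun, intervalIntegral.integral_const_mul,
        integral_exp_mul_complex hIa]
      set J : ℂ := Complex.exp (-(Complex.I * (bR:ℂ))) *
        ((Complex.exp (Complex.I * (aR:ℂ) * T) - Complex.exp (Complex.I * (aR:ℂ) * ((0:ℝ):ℂ))) /
          (Complex.I * (aR:ℂ))) with hJ
      have hJb : ‖J‖ ≤ 2 / |aR| := by
        rw [hJ, norm_mul, norm_div]
        have e1 : ‖Complex.exp (-(Complex.I * (bR:ℂ)))‖ = 1 := hne1 _ (by simp)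
        have e2 : ‖Complex.exp (Complex.I * (aR:ℂ) * T)‖ = 1 := hne1 _ (by simp)
        have e3 : ‖Complex.exp (Complex.I * (aR:ℂ) * ((0:ℝ):ℂ))‖ = 1 := hne1 _ (by simp)
        have e4 : ‖Complex.I * (aR:ℂ)‖ = |aR| := by
          rw [norm_mul, Complex.norm_I, one_mul, Complex.norm_real, Real.norm_eq_abs]
        have e5 : ‖Complex.exp (Complex.I * (aR:ℂ) * T) - Complex.exp (Complex.I * (aR:ℂ) * ((0:ℝ):ℂ))‖
            ≤ 2 := le_trans (norm_sub_le _ _) (by rw [e2, e3]; norm_num)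
        rw [e1, e4, one_mul]
        have haa : 0 < |aR| := abs_pos.mpr h0
        exact (div_le_div_iff_of_pos_right haa).mpr e5
      have := neg_abs_le J.re
      have habs := Complex.abs_re_le_norm J
      have : -(2/|aR|) ≤ J.re := by
        have h' : |J.re| ≤ 2/|aR| := le_trans habs hJb
        linarith [abs_le.mp h']
      linarith [this]
  -- summing up
  set Dsum : ℝ := ∑ g : Fin p → Fin m, ∑ h : Fin p → Fin m,
    (if cnt g = cnt h then (1:ℝ) else 0) with hDs
  have hquant : 2 * q ≤ Dsum := by
    have h1 := count_sum_ge m p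
    rw [← hDs] at h1
    have h2 : q * r^p = (m:ℝ)^(2*p) := by
      rw [hq, hr, ← pow_mul, ← mul_pow]
      congr 1
      field_simp
    have hpm : (0:ℝ) < ((p:ℝ)+1)^m := by positivity
    have h4 : q * (2 * ((p:ℝ)+1)^m) ≤ q * r^p := mul_le_mul_of_nonneg_left hp hq0.le
    rw [h2] at h4
    have h5 := h4.trans h1
    nlinarith [h5, hpm, hq0]
  have hlow : T * Dsum - C ≤ ∫ τ in (0:ℝ)..T, ‖f τ‖^(2*p) := by
    rw [hIint]
    have e1 : T * Dsum - C = ∑ g : Fin p → Fin m, ∑ h : Fin p → Fin m,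
        ((if cnt g = cnt h then T else 0) -
          (if S g - S h = 0 then (0:ℝ) else 2 / |S g - S h|)) := by
      rw [hDs, hC, Finset.mul_sum, ← Finset.sum_sub_distrib]
      refine Finset.sum_congr rfl fun g _ => ?_
      rw [Finset.mul_sum, ← Finset.sum_sub_distrib]
      refine Finset.sum_congr rfl fun h _ => ?_
      split <;> ring
    rw [e1]
    exact Finset.sum_le_sum fun g _ => Finset.sum_le_sum fun h _ => hterm g h
  have hbig : T * q < ∫ τ in (0:ℝ)..T, ‖f τ‖^(2*p) := by
    have : T * (2*q) - C ≤ T * Dsum - C := by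
      have := mul_le_mul_of_nonneg_left hquant hT0.le
      linarith
    have h3 : T * (2*q) - C = C + 2 := by
      rw [show T * (2*q) = 2*(T*q) by ring, hTq]
      ring
    linarith
  -- extract a point
  have hexists : ∃ τ : ℝ, q < ‖f τ‖^(2*p) := by
    by_contra hcon
    push_neg at hcon
    have hint : IntervalIntegrable (fun τ => ‖f τ‖^(2*p)) MeasureTheory.volume 0 T :=
      (hcontf.norm.pow _).intervalIntegrable _ _
    have hmono := intervalIntegral.integral_mono_on hT0.le hint
      (intervalIntegrable_const) (fun τ _ => hcon τ)
    rw [intervalIntegral.integral_const, smul_eq_mul, sub_zero] at hmono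
    linarith
  obtain ⟨τ, hτ⟩ := hexists
  have hfτ : (m:ℝ) - η < ‖f τ‖ := by
    by_contra hle
    push_neg at hle
    have := pow_le_pow_left₀ (norm_nonneg (f τ)) hle (2*p)
    rw [← hq] at this
    exact absurd hτ (not_lt.mpr this)
  refine ⟨τ, fun j => ?_⟩
  -- geometric conclusion
  have hn1 : 0 < n := j.pos
  set k : Fin m := Fin.succ j with hk
  have hk0 : k ≠ 0 := Fin.succ_ne_zero j
  have hz0 : z 0 τ = 1 := by
    rw [hz]
    simp [hμ, hw]
  have hμk : μ k = lam j := by rw [hμ, hk]; simp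
  have hwk : w k = θ j := by rw [hw, hk]; simp
  set u : ℂ := z k τ with hu
  have hsplit : ‖f τ‖ ≤ ‖z 0 τ + u‖ + ((m:ℝ) - 2) := by
    have hmem : k ∈ (univ : Finset (Fin m)).erase 0 := Finset.mem_erase.mpr ⟨hk0, mem_univ k⟩
    have e2 : f τ = z 0 τ + u + ∑ l ∈ ((univ : Finset (Fin m)).erase 0).erase k, z l τ := by
      simp only [hf]
      rw [← Finset.add_sum_erase _ _ (mem_univ (0 : Fin m)),
        ← Finset.add_sum_erase _ _ hmem]
      ring
    rw [e2]
    refine le_trans (norm_add_le _ _) ?_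
    have hcard : (((univ : Finset (Fin m)).erase 0).erase k).card = m - 2 := by
      rw [Finset.card_erase_of_mem hmem, Finset.card_erase_of_mem (mem_univ _),
        Finset.card_univ, Fintype.card_fin]
      omega
    have h5 : ‖∑ l ∈ ((univ : Finset (Fin m)).erase 0).erase k, z l τ‖ ≤ (m:ℝ) - 2 := by
      refine le_trans (norm_sum_le _ _) ?_
      rw [Finset.sum_congr rfl (fun l _ => hnormz l τ), Finset.sum_const, hcard,
        nsmul_eq_mul, mul_one]
      have hm2 : 2 ≤ m := by omega
      push_cast [Nat.cast_sub hm2]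
      norm_num
    linarith
  have h2η : 2 - η < ‖(1:ℂ) + u‖ := by
    rw [← hz0]
    linarith
  have hun : ‖u‖ = 1 := hnormz k τ
  have hnsq : u.re^2 + u.im^2 = 1 := by
    have h6 : Complex.normSq u = 1 := by
      rw [Complex.normSq_eq_norm_sq, hun]
      norm_num
    rw [Complex.normSq_apply] at h6
    nlinarith [h6]
  have hplus : ‖(1:ℂ) + u‖^2 = 2 + 2*u.re := by
    rw [Complex.sq_norm, Complex.normSq_apply]
    have e1 : ((1:ℂ)+u).re = 1 + u.re := by simp
    have e2 : ((1:ℂ)+u).im = u.im := by simp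
    rw [e1, e2]
    nlinarith [hnsq]
  have hminus : ‖u - 1‖^2 = 2 - 2*u.re := by
    rw [Complex.sq_norm, Complex.normSq_apply]
    have e1 : (u - (1:ℂ)).re = u.re - 1 := by simp
    have e2 : (u - (1:ℂ)).im = u.im := by simp
    rw [e1, e2]
    nlinarith [hnsq]
  have humδ : ‖u - 1‖ < δ := by
    have h7 : (2 - η)^2 < ‖(1:ℂ) + u‖^2 := by
      nlinarith [norm_nonneg ((1:ℂ) + u), h2η, hη0, hη2]
    nlinarith [norm_nonneg (u - 1), hδ, hη0, hη4, hplus, hminus, h7]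
  have hfact : Complex.exp (Complex.I * ((lam j * τ : ℝ) : ℂ)) -
      Complex.exp (Complex.I * ((θ j : ℝ) : ℂ)) =
      Complex.exp (Complex.I * ((θ j : ℝ) : ℂ)) * (u - 1) := by
    rw [hu, hz]
    simp only [hμk, hwk]
    rw [mul_sub, mul_one, ← Complex.exp_add]
    congr 2
    push_cast
    ring
  rw [hfact, norm_mul, hne1 _ (by simp), one_mul]
  exact humδ


lemma syn {n : ℕ} (lam θ : Fin n → ℝ)
    (hc : ∀ d : Fin n → ℤ, (∑ j, (d j : ℝ) * lam j) = 0 → (∑ j, (d j : ℝ) * θ j) = 0)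
    {δ : ℝ} (hδ : 0 < δ) :
    ∃ l > (0:ℝ), ∀ x : ℝ, ∃ τ ∈ Set.Icc x (x + l), ∀ j,
      ‖Complex.exp (Complex.I * ((lam j * τ : ℝ) : ℂ)) -
        Complex.exp (Complex.I * ((θ j : ℝ) : ℂ))‖ < δ := by
  classical
  set φ : ℝ → (Fin n → ℂ) := fun τ j => Complex.exp (Complex.I * ((lam j * τ : ℝ) : ℂ)) with hφ
  set c : Fin n → ℂ := fun j => Complex.exp (Complex.I * ((θ j : ℝ) : ℂ)) with hc0
  set K : Set (Fin n → ℂ) := closure (Set.range φ) with hK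
  have hφmul : ∀ s t : ℝ, φ s * φ t = φ (s + t) := by
    intro s t
    funext j
    simp only [hφ, Pi.mul_apply]
    rw [← Complex.exp_add]
    congr 1
    push_cast
    ring
  have hφnorm : ∀ t (j : Fin n), ‖φ t j‖ = 1 := fun t j => by
    simp [hφ, Complex.norm_exp]
  have hKsub : K ⊆ Metric.closedBall 0 1 := by
    rw [hK]
    refine closure_minimal ?_ Metric.isClosed_closedBall
    rintro _ ⟨t, rfl⟩
    rw [Metric.mem_closedBall, dist_zero_right]
    exact (pi_norm_le_iff_of_nonneg zero_le_one).mpr fun j => le_of_eq (hφnorm t j)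
  have hKcpt : IsCompact K :=
    (isCompact_closedBall (0 : Fin n → ℂ) 1).of_isClosed_subset isClosed_closure hKsub
  have hcK : c ∈ K := by
    rw [hK, Metric.mem_closure_iff]
    intro ε hε
    obtain ⟨τ, hτ⟩ := kron lam θ hc hε
    refine ⟨φ τ, ⟨τ, rfl⟩, ?_⟩
    rw [dist_pi_lt_iff hε]
    intro j
    rw [dist_eq_norm, norm_sub_rev]
    exact hτ j
  have hmulK : ∀ y ∈ K, y * c ∈ K := by
    intro y hy
    rw [hK] at hy hcK ⊢
    refine map_mem_closure₂ continuous_mul hy hcK ?_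
    rintro _ ⟨s', rfl⟩ _ ⟨t', rfl⟩
    exact ⟨s' + t', (hφmul s' t').symm⟩
  have hch : ∀ y : Fin n → ℂ, ∃ r : ℝ, y ∈ K → dist (y * c) (φ r) < δ/2 := by
    intro y
    by_cases hy : y ∈ K
    · have h2 : y * c ∈ K := hmulK y hy
      rw [hK, Metric.mem_closure_iff] at h2
      obtain ⟨z, ⟨r, rfl⟩, hz⟩ := h2 (δ/2) (by positivity)
      exact ⟨r, fun _ => hz⟩
    · exact ⟨0, fun h => absurd h hy⟩
  choose t ht using hch
  set U : (Fin n → ℂ) → Set (Fin n → ℂ) :=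
    fun y => (fun z => z * c) ⁻¹' Metric.ball (φ (t y)) (δ/2) with hU
  have hUopen : ∀ y, IsOpen (U y) :=
    fun y => Metric.isOpen_ball.preimage (continuous_id.mul continuous_const)
  have hcover : K ⊆ ⋃ y ∈ K, U y := by
    intro y hy
    exact Set.mem_biUnion hy (by
      rw [hU]
      simp only [Set.mem_preimage, Metric.mem_ball]
      exact ht y hy)
  obtain ⟨b, hbK, hbfin, hbcover⟩ := hKcpt.elim_finite_subcover_image
    (fun y _ => hUopen y) hcover
  set M : ℝ := ∑ y ∈ hbfin.toFinset, |t y| with hM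
  have hM0 : 0 ≤ M := Finset.sum_nonneg fun y _ => abs_nonneg _
  have hMy : ∀ y ∈ b, |t y| ≤ M :=
    fun y hy => Finset.single_le_sum (fun z _ => abs_nonneg (t z))
      (hbfin.mem_toFinset.mpr hy)
  refine ⟨2*M + 1, by linarith, fun x => ?_⟩
  have hy₀ : φ (-(x+M)) ∈ K := by
    rw [hK]
    exact subset_closure ⟨-(x+M), rfl⟩
  obtain ⟨y, hyb, hyU⟩ := Set.mem_iUnion₂.mp (hbcover hy₀)
  have hdist : dist (φ (-(x+M)) * c) (φ (t y)) < δ/2 := by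
    have := hyU
    rw [hU] at this
    simpa using this
  refine ⟨t y + (x + M), ⟨by linarith [(abs_le.mp (hMy y hyb)).1],
    by linarith [(abs_le.mp (hMy y hyb)).2]⟩, fun j => ?_⟩
  have hcomp : dist ((φ (-(x+M)) * c) j) (φ (t y) j) < δ/2 :=
    lt_of_le_of_lt (dist_le_pi_dist _ _ j) hdist
  rw [dist_eq_norm] at hcomp
  have hkey : ‖φ (t y + (x+M)) j - c j‖ < δ/2 := by
    have e1 : φ (x+M) j * ((φ (-(x+M)) * c) j - φ (t y) j) = c j - φ (t y + (x+M)) j := by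
      have e2 : φ (x+M) j * φ (-(x+M)) j = 1 := by
        have := congrFun (hφmul (x+M) (-(x+M))) j
        simp only [Pi.mul_apply] at this
        rw [this, show (x+M) + -(x+M) = (0:ℝ) by ring, hφ]
        simp
      have e3 : φ (x+M) j * φ (t y) j = φ (t y + (x+M)) j := by
        have := congrFun (hφmul (x+M) (t y)) j
        simp only [Pi.mul_apply] at this
        rw [this]
        congr 1
        ring
      simp only [Pi.mul_apply]
      rw [mul_sub]
      rw [show φ (x+M) j * (φ (-(x+M)) j * c j) = (φ (x+M) j * φ (-(x+M)) j) * c j by ring,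
        e2, one_mul, e3]
    have e4 : ‖φ (x+M) j * ((φ (-(x+M)) * c) j - φ (t y) j)‖ < δ/2 := by
      rw [norm_mul, hφnorm, one_mul]
      exact hcomp
    rw [e1] at e4
    rw [norm_sub_rev]
    exact e4
  calc ‖Complex.exp (Complex.I * ((lam j * (t y + (x + M)) : ℝ) : ℂ)) -
        Complex.exp (Complex.I * ((θ j : ℝ) : ℂ))‖
      = ‖φ (t y + (x+M)) j - c j‖ := by rw [hφ, hc0]
    _ < δ/2 := hkey
    _ < δ := by linarith

end BohrAux

/-- Bohr's equivalence relation on finite exponential sums with exponents `lam`: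
there is a `ℚ`-linear map `ψ` from the `ℚ`-span of the exponents to `ℝ`
with `bⱼ = aⱼ e^{i ψ(λⱼ)}` for all `j`. -/
def FinEquiv {n : ℕ} (lam : Fin n → ℝ) (a b : Fin n → ℂ) : Prop :=
  ∃ ψ : (Submodule.span ℚ (Set.range lam)) →ₗ[ℚ] ℝ,
    ∀ j, b j = a j *
      Complex.exp (Complex.I *
        (ψ ⟨lam j, Submodule.subset_span (Set.mem_range_self j)⟩ : ℝ))

/-- If `f₁(s) = ∑ aⱼ e^{λⱼ s}` and `f₂(s) = ∑ bⱼ e^{λⱼ s}` are equivalent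
exponential polynomials, then for any strip `σ₀ ≤ Re s ≤ σ₁` and `ε > 0` there is
a relatively dense set of real `τ` with `|f₁(s+iτ) − f₂(s)| < ε` on the strip. -/
theorem finEquiv_translation_numbers {n : ℕ} (lam : Fin n → ℝ)
    (hinj : Function.Injective lam) (a b : Fin n → ℂ)
    (heq : FinEquiv lam a b) (σ₀ σ₁ : ℝ) (hσ : σ₀ < σ₁) (ε : ℝ) (hε : 0 < ε) :
    ∃ l > (0 : ℝ), ∀ x : ℝ, ∃ τ ∈ Set.Icc x (x + l),
      ∀ s : ℂ, σ₀ ≤ s.re → s.re ≤ σ₁ →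
        ‖(∑ j, a j * Complex.exp ((lam j : ℂ) * (s + Complex.I * (τ : ℂ)))) -
          ∑ j, b j * Complex.exp ((lam j : ℂ) * s)‖ < ε := by
  classical
  obtain ⟨ψ, hψ⟩ := heq
  set θ : Fin n → ℝ :=
    fun j => ψ ⟨lam j, Submodule.subset_span (Set.mem_range_self j)⟩ with hθ
  have hcompat : ∀ d : Fin n → ℤ,
      (∑ j, (d j : ℝ) * lam j) = 0 → (∑ j, (d j : ℝ) * θ j) = 0 := by
    intro d hd
    set v : Fin n → Submodule.span ℚ (Set.range lam) :=
      fun j => ⟨lam j, Submodule.subset_span (Set.mem_range_self j)⟩ with hv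
    have hsum : ((∑ j, d j • v j : Submodule.span ℚ (Set.range lam)) : ℝ)
        = ∑ j, (d j : ℝ) * lam j := by
      push_cast
      refine Finset.sum_congr rfl fun j _ => ?_
      rw [zsmul_eq_mul]
    have hx0 : (∑ j, d j • v j) = (0 : Submodule.span ℚ (Set.range lam)) := by
      apply Subtype.ext
      rw [hsum, hd]
      rfl
    have h5 := congrArg ψ hx0
    rw [map_zero, map_sum] at h5
    simp only [map_zsmul] at h5
    rw [← h5]
    refine Finset.sum_congr rfl fun j _ => ?_
    rw [zsmul_eq_mul, hθ]
  set B : ℝ := ∑ j, ‖a j‖ * max (Real.exp (lam j * σ₀)) (Real.exp (lam j * σ₁)) with hB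
  have hB0 : 0 ≤ B := Finset.sum_nonneg fun j _ => by positivity
  set δ : ℝ := ε / (B + 1) with hδdef
  have hB1 : (0:ℝ) < B + 1 := by linarith
  have hδ0 : 0 < δ := by positivity
  obtain ⟨l, hl0, hl⟩ := BohrAux.syn lam θ hcompat hδ0
  refine ⟨l, hl0, fun x => ?_⟩
  obtain ⟨τ, hτmem, hτ⟩ := hl x
  refine ⟨τ, hτmem, fun s hs0 hs1 => ?_⟩
  have key : (∑ j, a j * Complex.exp ((lam j : ℂ) * (s + Complex.I * (τ:ℂ)))) -
      ∑ j, b j * Complex.exp ((lam j : ℂ) * s) =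
      ∑ j, (a j * Complex.exp ((lam j : ℂ) * s)) *
        (Complex.exp (Complex.I * ((lam j * τ : ℝ):ℂ)) -
          Complex.exp (Complex.I * ((θ j : ℝ):ℂ))) := by
    rw [← Finset.sum_sub_distrib]
    refine Finset.sum_congr rfl fun j _ => ?_
    rw [hψ j, mul_sub]
    congr 1
    · rw [mul_assoc, ← Complex.exp_add]
      congr 1
      push_cast
      ring
    · ring
  rw [key]
  have hexpb : ∀ j : Fin n, ‖Complex.exp ((lam j : ℂ) * s)‖ ≤
      max (Real.exp (lam j * σ₀)) (Real.exp (lam j * σ₁)) := by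
    intro j
    have hre : ((lam j : ℂ) * s).re = lam j * s.re := by
      simp [Complex.mul_re]
    rw [Complex.norm_exp, hre]
    have hmax : lam j * s.re ≤ max (lam j * σ₀) (lam j * σ₁) := by
      rcases le_or_gt 0 (lam j) with h | h
      · exact le_max_of_le_right (mul_le_mul_of_nonneg_left hs1 h)
      · exact le_max_of_le_left (by nlinarith)
    calc Real.exp (lam j * s.re) ≤ Real.exp (max (lam j * σ₀) (lam j * σ₁)) :=
          Real.exp_le_exp.mpr hmax
      _ = max (Real.exp (lam j * σ₀)) (Real.exp (lam j * σ₁)) :=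
          Real.exp_monotone.map_max
  calc ‖∑ j, (a j * Complex.exp ((lam j : ℂ) * s)) *
        (Complex.exp (Complex.I * ((lam j * τ : ℝ):ℂ)) -
          Complex.exp (Complex.I * ((θ j : ℝ):ℂ)))‖
      ≤ ∑ j, ‖(a j * Complex.exp ((lam j : ℂ) * s)) *
        (Complex.exp (Complex.I * ((lam j * τ : ℝ):ℂ)) -
          Complex.exp (Complex.I * ((θ j : ℝ):ℂ)))‖ := norm_sum_le _ _
    _ ≤ ∑ j, (‖a j‖ * max (Real.exp (lam j * σ₀)) (Real.exp (lam j * σ₁))) * δ := by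
        refine Finset.sum_le_sum fun j _ => ?_
        rw [norm_mul, norm_mul]
        have h1 := hexpb j
        have h2 := (hτ j).le
        have h3 : (0:ℝ) ≤ ‖a j‖ := norm_nonneg _
        have h4 : (0:ℝ) ≤ ‖Complex.exp ((lam j : ℂ) * s)‖ := norm_nonneg _
        have h5 : (0:ℝ) ≤ ‖Complex.exp (Complex.I * ((lam j * τ : ℝ):ℂ)) -
          Complex.exp (Complex.I * ((θ j : ℝ):ℂ))‖ := norm_nonneg _
        have h6 : (0:ℝ) ≤ max (Real.exp (lam j * σ₀)) (Real.exp (lam j * σ₁)) :=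
          le_trans (Real.exp_pos _).le (le_max_left _ _)
        calc ‖a j‖ * ‖Complex.exp ((lam j : ℂ) * s)‖ * ‖Complex.exp (Complex.I *
              ((lam j * τ : ℝ):ℂ)) - Complex.exp (Complex.I * ((θ j : ℝ):ℂ))‖
            ≤ ‖a j‖ * (max (Real.exp (lam j * σ₀)) (Real.exp (lam j * σ₁))) *
              ‖Complex.exp (Complex.I * ((lam j * τ : ℝ):ℂ)) -
                Complex.exp (Complex.I * ((θ j : ℝ):ℂ))‖ :=
              mul_le_mul_of_nonneg_right (mul_le_mul_of_nonneg_left h1 h3) h5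
          _ ≤ ‖a j‖ * (max (Real.exp (lam j * σ₀)) (Real.exp (lam j * σ₁))) * δ :=
              mul_le_mul_of_nonneg_left h2 (by positivity)
    _ = B * δ := by rw [hB, Finset.sum_mul]
    _ < ε := by
        have h7 : B / (B + 1) < 1 := (div_lt_one hB1).mpr (by linarith)
        calc B * δ = ε * (B / (B + 1)) := by rw [hδdef]; ring
          _ < ε * 1 := by
              exact mul_lt_mul_of_pos_left h7 hε
          _ = ε := mul_one ε
end
end

section
/- Let f₁(t) = Σ_{j=1}^n a_j e^{iλ_j t} and f₂(t) = Σ_{j=1}^n b_j e^{iλ_j t} be equivalent trigonometric polynomials with distinct real frequencies. Then for every ε > 0 there exists a relatively dense set of real numbers τ such that |f₁(t + τ) − f₂(t)| < ε for all t ∈ ℝ. -/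
noncomputable section

open Complex Finset

lemma norm_exp_I_mul_ofReal (x : ℝ) : ‖Complex.exp (Complex.I * (x:ℂ))‖ = 1 := by
  rw [mul_comm, Complex.norm_exp_ofReal_mul_I]

lemma normSq_exp_sub_one (x : ℝ) :
    ‖Complex.exp (Complex.I * x) - 1‖ ^ 2 = 2 - 2 * Real.cos x := by
  rw [mul_comm, Complex.exp_mul_I, ← Complex.ofReal_cos, ← Complex.ofReal_sin]
  rw [Complex.sq_norm]
  simp only [Complex.normSq_apply, Complex.add_re, Complex.sub_re, Complex.ofReal_re,
    Complex.mul_re, Complex.I_re, Complex.I_im, Complex.ofReal_im, Complex.one_re,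
    Complex.add_im, Complex.sub_im, Complex.mul_im, Complex.one_im]
  nlinarith [Real.sin_sq_add_cos_sq x]

lemma eN_neg (x : ℝ) : ‖Complex.exp (Complex.I * ((-x : ℝ):ℂ)) - 1‖
    = ‖Complex.exp (Complex.I * x) - 1‖ := by
  have key : Complex.exp (Complex.I * ((-x:ℝ):ℂ)) * Complex.exp (Complex.I * (x:ℂ)) = 1 := by
    rw [← Complex.exp_add, show Complex.I * ((-x:ℝ):ℂ) + Complex.I * x = 0 by push_cast; ring,
      Complex.exp_zero]
  have h : Complex.exp (Complex.I * ((-x:ℝ):ℂ)) - 1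
      = Complex.exp (Complex.I * ((-x:ℝ):ℂ)) * (1 - Complex.exp (Complex.I * x)) := by
    rw [mul_one_sub, key]
  rw [h, norm_mul, _root_.norm_exp_I_mul_ofReal, one_mul, norm_sub_rev]

lemma eN_add (x y : ℝ) : ‖Complex.exp (Complex.I * ((x + y : ℝ):ℂ)) - 1‖
    ≤ ‖Complex.exp (Complex.I * x) - 1‖ + ‖Complex.exp (Complex.I * y) - 1‖ := by
  have h : Complex.exp (Complex.I * ((x + y : ℝ):ℂ)) - 1
      = Complex.exp (Complex.I * x) * (Complex.exp (Complex.I * y) - 1)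
        + (Complex.exp (Complex.I * x) - 1) := by
    push_cast; rw [mul_add, Complex.exp_add]; ring
  rw [h]
  refine le_trans (norm_add_le _ _) ?_
  rw [norm_mul, _root_.norm_exp_I_mul_ofReal, one_mul, add_comm]

lemma eN_nat (c : ℕ) (x : ℝ) : ‖Complex.exp (Complex.I * ((c * x : ℝ):ℂ)) - 1‖
    ≤ c * ‖Complex.exp (Complex.I * x) - 1‖ := by
  induction c with
  | zero => simp
  | succ k ih =>
      have h : (((k + 1 : ℕ) : ℝ) * x : ℝ) = ((k:ℝ) * x : ℝ) + x := by push_cast; ring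
      rw [h]
      refine le_trans (eN_add _ _) ?_
      rw [Nat.cast_add, Nat.cast_one]
      nlinarith [norm_nonneg (Complex.exp (Complex.I * (x:ℂ)) - 1), ih]

lemma eN_int (c : ℤ) (x : ℝ) : ‖Complex.exp (Complex.I * ((c * x : ℝ):ℂ)) - 1‖
    ≤ |(c:ℝ)| * ‖Complex.exp (Complex.I * x) - 1‖ := by
  have habs : |(c:ℝ)| = ((c.natAbs : ℕ) : ℝ) := by rw [← Int.cast_abs]; exact (Nat.cast_natAbs c).symm
  rcases Int.natAbs_eq c with h | h
  · have hc : (c:ℝ) = ((c.natAbs:ℕ):ℝ) := by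
      conv_lhs => rw [h]
      push_cast; exact habs
    rw [habs, hc]; exact eN_nat _ _
  · have hc : (c:ℝ) = -(((c.natAbs:ℕ):ℝ)) := by
      conv_lhs => rw [h]
      push_cast; rw [habs]
    have harg : ((c:ℝ) * x) = -((((c.natAbs:ℕ):ℝ)) * x) := by rw [hc]; ring
    rw [habs, harg, eN_neg]; exact eN_nat _ _

lemma eN_sum {ι : Type*} [DecidableEq ι] (s : Finset ι) (c : ι → ℤ) (x : ι → ℝ) :
    ‖Complex.exp (Complex.I * ((∑ k ∈ s, (c k : ℝ) * x k : ℝ):ℂ)) - 1‖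
      ≤ ∑ k ∈ s, |(c k : ℝ)| * ‖Complex.exp (Complex.I * ((x k : ℝ):ℂ)) - 1‖ := by
  induction s using Finset.induction with
  | empty => simp
  | insert _ _ hnot ih =>
      rename_i a s
      rw [Finset.sum_insert hnot, Finset.sum_insert hnot]
      refine le_trans (eN_add _ _) ?_
      exact add_le_add (eN_int _ _) ih

lemma cos_pow_expand (N : ℕ) (x : ℝ) :
    ((2:ℂ))^N * ((1 + Real.cos x : ℝ):ℂ)^N
      = ∑ j ∈ Finset.range (2*N+1), ((2*N).choose j : ℂ)
          * Complex.exp (Complex.I * ((((j:ℝ) - (N:ℝ)) * x : ℝ):ℂ)) := by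
  set e : ℂ := Complex.exp (Complex.I * (x:ℂ)) with he
  have key : (e + 1)^2 = e * ((2 + 2 * Real.cos x : ℝ):ℂ) := by
    rw [he, mul_comm Complex.I, Complex.exp_mul_I]
    push_cast
    linear_combination (Complex.sin (x:ℂ))^2 * Complex.I_sq
      - Complex.sin_sq_add_cos_sq (x:ℂ)
  have hsplit : ∀ j : ℕ, Complex.exp (Complex.I * ((((j:ℝ) - (N:ℝ)) * x : ℝ):ℂ))
      = Complex.exp (Complex.I * ((-((N:ℝ) * x) : ℝ):ℂ)) * e^j := by
    intro j
    rw [he, ← Complex.exp_nat_mul, ← Complex.exp_add]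
    congr 1
    push_cast
    ring
  have hsum : ∑ j ∈ Finset.range (2*N+1), ((2*N).choose j : ℂ)
        * Complex.exp (Complex.I * ((((j:ℝ) - (N:ℝ)) * x : ℝ):ℂ))
      = Complex.exp (Complex.I * ((-((N:ℝ) * x) : ℝ):ℂ)) * (e + 1)^(2*N) := by
    rw [add_pow, Finset.mul_sum]
    refine Finset.sum_congr rfl fun j hj => ?_
    rw [hsplit j, one_pow]
    ring
  rw [hsum, pow_mul, key, mul_pow, ← mul_assoc]
  have hone : Complex.exp (Complex.I * ((-((N:ℝ) * x) : ℝ):ℂ)) * e^N = 1 := by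
    rw [he, ← Complex.exp_nat_mul, ← Complex.exp_add,
      show Complex.I * ((-((N:ℝ) * x) : ℝ):ℂ) + (N:ℂ) * (Complex.I * (x:ℂ)) = 0 by
        push_cast; ring, Complex.exp_zero]
  rw [hone, one_mul]
  push_cast
  rw [← mul_pow]
  congr 1
  ring

lemma norm_exp_I_mul_ofReal' (x : ℝ) : ‖Complex.exp (Complex.I * (x:ℝ))‖ = 1 := by
  rw [mul_comm, Complex.norm_exp_ofReal_mul_I]

/-- key integral bound -/
lemma integral_exp_bound (ν w x T : ℝ) (hν : ν ≠ 0) :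
    ‖∫ t in x..(x+T), Complex.exp (Complex.I * ((ν * t - w : ℝ):ℂ))‖ ≤ 2 / |ν| := by
  have hrw : ∀ t : ℝ, Complex.exp (Complex.I * ((ν * t - w : ℝ):ℂ))
      = Complex.exp (-(Complex.I * w)) * Complex.exp ((Complex.I * ν) * t) := by
    intro t
    rw [← Complex.exp_add]
    congr 1
    push_cast
    ring
  simp only [hrw]
  rw [intervalIntegral.integral_const_mul, integral_exp_mul_complex (by
    simp [Complex.ext_iff, hν, Complex.I_ne_zero] : Complex.I * (ν:ℂ) ≠ 0)]
  rw [norm_mul]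
  have h1 : ‖Complex.exp (-(Complex.I * (w:ℂ)))‖ = 1 := by
    rw [Complex.norm_exp]
    simp
  rw [h1, one_mul, norm_div]
  have h2 : ∀ y : ℝ, ‖Complex.exp (Complex.I * (ν:ℂ) * (y:ℂ))‖ = 1 := by
    intro y
    rw [Complex.norm_exp]
    simp
  have h3 : ‖Complex.I * (ν:ℂ)‖ = |ν| := by
    rw [norm_mul]
    simp
  rw [h3]
  gcongr
  refine le_trans (norm_sub_le _ _) ?_
  rw [h2, h2]
  norm_num

set_option maxHeartbeats 1000000 in
lemma bohr_kronecker {m : ℕ} (μ : Fin m → ℝ)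
    (hind : ∀ l : Fin m → ℤ, (∑ k, (l k : ℝ) * μ k) = 0 → l = 0)
    (θ : Fin m → ℝ) (η : ℝ) (hη : 0 < η) (hη2 : η < 2) :
    ∃ L > 0, ∀ x : ℝ, ∃ τ ∈ Set.Icc x (x + L),
      ∀ k, 1 - η < Real.cos (μ k * τ - θ k) := by
  rcases Nat.eq_zero_or_pos m with hm | hm
  · subst hm
    exact ⟨1, one_pos, fun x => ⟨x, ⟨le_refl x, by linarith⟩, fun k => Fin.elim0 k⟩⟩
  -- choose N
  set r : ℝ := 1 - η / 2 with hr
  have hr0 : 0 < r := by simp [hr]; linarith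
  have hr1 : r < 1 := by simp [hr]; linarith
  obtain ⟨N, hN1, hNsmall⟩ : ∃ N : ℕ, 1 ≤ N ∧ 2 * ((2*N : ℕ):ℝ)^m * r^N < 1 := by
    obtain ⟨N, hNs, hN1⟩ := (((tendsto_pow_const_mul_const_pow_of_lt_one m hr0.le
      hr1).eventually_lt_const (show (0:ℝ) < 1/(2*2^m) by positivity)).and
      (Filter.eventually_ge_atTop 1)).exists
    refine ⟨N, hN1, ?_⟩
    have hcast : ((2*N:ℕ):ℝ)^m = 2^m * (N:ℝ)^m := by push_cast; ring
    have h2 : (0:ℝ) < 2*2^m := by positivity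
    calc 2 * ((2*N:ℕ):ℝ)^m * r^N = (2*2^m) * ((N:ℝ)^m * r^N) := by rw [hcast]; ring
      _ < (2*2^m) * (1/(2*2^m)) := mul_lt_mul_of_pos_left hNs h2
      _ = 1 := by field_simp
  -- Fourier data
  set JJ : Finset (Fin m → ℕ) := Fintype.piFinset (fun _ => Finset.range (2*N+1)) with hJJ
  set J₀ : Fin m → ℕ := fun _ => N with hJ₀
  have hJ₀mem : J₀ ∈ JJ := by
    rw [hJJ, Fintype.mem_piFinset]
    intro k
    rw [Finset.mem_range]
    simp only [hJ₀]
    omega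
  set Cco : (Fin m → ℕ) → ℝ := fun J => ∏ k, (((2*N).choose (J k) : ℕ) : ℝ) with hCco
  set ν : (Fin m → ℕ) → ℝ := fun J => ∑ k, (((J k):ℝ) - N) * μ k with hν
  set w : (Fin m → ℕ) → ℝ := fun J => ∑ k, (((J k):ℝ) - N) * θ k with hw
  set F : ℝ → ℝ := fun t => ∏ k, (1 + Real.cos (μ k * t - θ k)) with hF
  have hFcont : Continuous F := by
    rw [hF]
    exact continuous_finset_prod _ fun k _ => by continuity
  have hFnonneg : ∀ t, 0 ≤ F t := by
    intro t
    rw [hF]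
    exact Finset.prod_nonneg fun k _ => by nlinarith [Real.neg_one_le_cos (μ k * t - θ k)]
  have hFle : ∀ t k, 1 + Real.cos (μ k * t - θ k) ≤ 2 := by
    intro t k
    nlinarith [Real.cos_le_one (μ k * t - θ k)]
  -- expansion
  have hexp : ∀ t : ℝ, ((2:ℂ))^(N*m) * ((F t : ℝ):ℂ)^N
      = ∑ J ∈ JJ, (Cco J : ℂ) * Complex.exp (Complex.I * ((ν J * t - w J : ℝ):ℂ)) := by
    intro t
    have cast1 : ((F t : ℝ):ℂ) = ∏ k, ((1 + Real.cos (μ k * t - θ k) : ℝ):ℂ) := by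
      rw [hF]; push_cast; rfl
    rw [cast1, ← Finset.prod_pow]
    have h2pow : ((2:ℂ))^(N*m) = ∏ _k : Fin m, ((2:ℂ))^N := by
      rw [Finset.prod_const, ← pow_mul, Finset.card_univ, Fintype.card_fin, mul_comm]
    rw [h2pow, ← Finset.prod_mul_distrib,
      Finset.prod_congr rfl (fun k _ => cos_pow_expand N (μ k * t - θ k)),
      Finset.prod_univ_sum, ← hJJ]
    refine Finset.sum_congr rfl fun J hJ => ?_
    rw [Finset.prod_mul_distrib]
    congr 1
    · rw [hCco]; push_cast; rfl
    · rw [← Complex.exp_sum]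
      congr 1
      rw [← Finset.mul_sum]
      congr 1
      rw [← Complex.ofReal_sum]
      congr 1
      rw [hν, hw, Finset.sum_mul, ← Finset.sum_sub_distrib]
      exact Finset.sum_congr rfl fun k _ => by ring
  -- nonvanishing frequencies
  have hν0 : ν J₀ = 0 := by simp [hν, hJ₀]
  have hw0 : w J₀ = 0 := by simp [hw, hJ₀]
  have hνne : ∀ J ∈ JJ, J ≠ J₀ → ν J ≠ 0 := by
    intro J hJ hne hzero
    apply hne
    have : (fun k => ((J k : ℤ) - N)) = 0 := by
      apply hind
      rw [← hzero, hν]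
      push_cast
      exact Finset.sum_congr rfl fun k _ => by ring
    funext k
    have h2 := congrFun this k
    simp only [Pi.zero_apply, sub_eq_zero] at h2
    simp only [hJ₀]
    exact_mod_cast h2
  obtain ⟨C, hC⟩ : ∃ C : ℝ, C = (((2*N).choose N : ℕ) : ℝ)^m := ⟨_, rfl⟩
  have hCpos : 0 < C := by
    rw [hC]
    have h1 : 0 < (2*N).choose N := Nat.choose_pos (by omega)
    positivity
  -- the constant S bounding the oscillating terms
  obtain ⟨S, hS⟩ : ∃ S : ℝ, S = ∑ J ∈ JJ.erase J₀, Cco J * (2 / |ν J|) := ⟨_, rfl⟩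
  have hCconn : ∀ J, 0 ≤ Cco J := by
    intro J
    rw [hCco]
    positivity
  have hSnonneg : 0 ≤ S := hS ▸ Finset.sum_nonneg fun J hJ =>
    mul_nonneg (hCconn J) (div_nonneg (by norm_num) (abs_nonneg _))
  obtain ⟨T, hT⟩ : ∃ T : ℝ, T = 2*S/C + 1 := ⟨_, rfl⟩
  have hTpos : 0 < T := by
    have h1 : (0:ℝ) ≤ 2*S/C := div_nonneg (by linarith) hCpos.le
    rw [hT]; linarith
  refine ⟨T, hTpos, fun x => ?_⟩
  have hcont : Continuous fun t => (F t)^N := hFcont.pow N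
  have hxle : x ≤ x + T := by linarith
  obtain ⟨P, hP⟩ : ∃ P : ℝ, P = (2:ℝ)^(N*m) := ⟨_, rfl⟩
  have hPpos : 0 < P := by rw [hP]; positivity
  -- the integral identity
  have hI1 : ((∫ t in x..(x+T), (F t)^N : ℝ) : ℂ) = ∫ t in x..(x+T), ((F t : ℝ):ℂ)^N := by
    have hc : ∀ t:ℝ, ((F t:ℝ):ℂ)^N = (((F t)^N : ℝ):ℂ) := by intro t; push_cast; rfl
    simp only [hc]
    rw [intervalIntegral.integral_ofReal]
  have hCco0 : Cco J₀ = C := by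
    simp only [hCco, hJ₀, hC]
    rw [Finset.prod_const, Finset.card_univ, Fintype.card_fin]
  have hI2 : (2:ℂ)^(N*m) * ((∫ t in x..(x+T), (F t)^N : ℝ):ℂ)
      = (C:ℂ)*(T:ℂ) + ∑ J ∈ JJ.erase J₀, (Cco J:ℂ)
          * ∫ t in x..(x+T), Complex.exp (Complex.I * ((ν J * t - w J : ℝ):ℂ)) := by
    rw [hI1, ← intervalIntegral.integral_const_mul]
    simp only [hexp]
    have hcontJ : ∀ J : Fin m → ℕ, Continuous fun t : ℝ =>
        ((Cco J : ℝ):ℂ) * Complex.exp (Complex.I * ((ν J * t - w J : ℝ):ℂ)) := by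
      intro J
      continuity
    rw [intervalIntegral.integral_finset_sum (fun J _ => (hcontJ J).intervalIntegrable _ _)]
    simp only [intervalIntegral.integral_const_mul]
    rw [← Finset.add_sum_erase _ _ hJ₀mem, hν0, hw0, hCco0]
    congr 1
    have h1 : ∀ t : ℝ, Complex.exp (Complex.I * (((0:ℝ) * t - (0:ℝ) : ℝ):ℂ)) = 1 := by
      intro t
      simp
    simp only [h1]
    rw [intervalIntegral.integral_const, Complex.real_smul]
    push_cast
    ring
  -- deduce the lower bound on the integral
  have hlow : C*T - S ≤ P * (∫ t in x..(x+T), (F t)^N) := by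
    have hdiff : ((P * (∫ t in x..(x+T), (F t)^N) - C*T : ℝ) : ℂ)
        = ∑ J ∈ JJ.erase J₀, (Cco J:ℂ)
          * ∫ t in x..(x+T), Complex.exp (Complex.I * ((ν J * t - w J : ℝ):ℂ)) := by
      have h2 : ((P:ℝ):ℂ) = (2:ℂ)^(N*m) := by rw [hP]; push_cast; ring
      rw [Complex.ofReal_sub, Complex.ofReal_mul, Complex.ofReal_mul, h2, hI2]
      ring
    have hnorm : |P * (∫ t in x..(x+T), (F t)^N) - C*T| ≤ S := by
      rw [← Real.norm_eq_abs, ← Complex.norm_real, hdiff]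
      refine le_trans (norm_sum_le _ _) ?_
      rw [hS]
      refine Finset.sum_le_sum fun J hJ => ?_
      rw [norm_mul, Complex.norm_real, Real.norm_eq_abs, _root_.abs_of_nonneg (hCconn J)]
      have hJne := (Finset.mem_erase.1 hJ)
      exact mul_le_mul_of_nonneg_left
        (integral_exp_bound (ν J) (w J) x T (hνne J hJne.2 hJne.1)) (hCconn J)
    have := abs_le.1 hnorm
    linarith [this.1]
  -- maximum point
  obtain ⟨τ, hτmem, hτmax⟩ := (isCompact_Icc (a := x) (b := x+T)).exists_isMaxOn
    (Set.nonempty_Icc.2 hxle) hcont.continuousOn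
  refine ⟨τ, hτmem, ?_⟩
  have hintle : (∫ t in x..(x+T), (F t)^N) ≤ T * (F τ)^N := by
    have h := intervalIntegral.integral_mono_on (μ := MeasureTheory.volume) hxle (hcont.intervalIntegrable _ _)
      intervalIntegrable_const (fun t ht => hτmax ht)
    rw [intervalIntegral.integral_const, smul_eq_mul] at h
    calc (∫ t in x..(x+T), (F t)^N) ≤ (x + T - x) * (F τ)^N := h
      _ = T * (F τ)^N := by ring
  have hCT : C * T = 2*S + C := by
    rw [hT]
    field_simp [hCpos.ne']
  have hFτN : C / (2 * P) ≤ (F τ)^N := by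
    have h1 : S + C ≤ P * (T * (F τ)^N) := by
      have h2 := mul_le_mul_of_nonneg_left hintle hPpos.le
      linarith [hlow, hCT]
    rw [div_le_iff₀ (by positivity)]
    nlinarith [hTpos, hCpos, h1, hCT, hSnonneg]
  -- choice of N gives the strict comparison
  have hBN : ((2:ℝ)^m * r)^N < C / (2 * P) := by
    set a : ℝ := (2:ℝ)^N with ha
    set d : ℝ := ((2*N:ℕ):ℝ) with hd
    have hapos : 0 < a := by positivity
    have hdpos : 0 < d := by rw [hd]; exact_mod_cast Nat.succ_le_of_lt (by omega)
    have hch : a * a ≤ d * (((2*N).choose N : ℕ):ℝ) := by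
      have h4 : ((4:ℕ))^N ≤ 2*N * Nat.centralBinom N :=
        Nat.four_pow_le_two_mul_self_mul_centralBinom N hN1
      have : ((4:ℕ):ℝ)^N ≤ ((2*N : ℕ):ℝ) * ((Nat.centralBinom N : ℕ):ℝ) := by
        exact_mod_cast h4
      calc a * a = ((4:ℕ):ℝ)^N := by rw [ha, ← mul_pow]; norm_num
        _ ≤ ((2*N : ℕ):ℝ) * ((Nat.centralBinom N : ℕ):ℝ) := this
        _ = d * (((2*N).choose N : ℕ):ℝ) := by rw [hd, Nat.centralBinom]
    have hC4 : a^m * a^m / d^m ≤ C := by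
      have hq : a * a / d ≤ (((2*N).choose N : ℕ):ℝ) := by
        rw [div_le_iff₀ hdpos]
        linarith [hch]
      calc a^m * a^m / d^m = (a * a / d)^m := by
            rw [div_pow, mul_pow]
        _ ≤ (((2*N).choose N : ℕ):ℝ)^m := pow_le_pow_left₀ (by positivity) hq m
        _ = C := by rw [hC]
    have hgoal1 : ((2:ℝ)^m * r)^N = a^m * r^N := by
      rw [mul_pow, ha, ← pow_mul, ← pow_mul, mul_comm m N]
    have hPa : P = a^m := by rw [hP, ha, pow_mul]
    rw [hgoal1, hPa, lt_div_iff₀ (by positivity)]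
    calc a^m * r^N * (2*a^m) = (2*d^m*r^N) * (a^m*a^m/d^m) := by
          field_simp
      _ < 1 * (a^m*a^m/d^m) := by
          refine mul_lt_mul_of_pos_right ?_ (by positivity)
          calc 2*d^m*r^N = 2 * ((2*N:ℕ):ℝ)^m * r^N := by rw [hd]
            _ < 1 := hNsmall
      _ ≤ C := by rw [one_mul]; exact hC4
  have hFτ : (2:ℝ)^m * r < F τ := by
    by_contra hle
    push_neg at hle
    have hpw : (F τ)^N ≤ ((2:ℝ)^m*r)^N := pow_le_pow_left₀ (hFnonneg τ) hle N
    linarith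
  intro k
  by_contra hcos
  push_neg at hcos
  have hfac : 1 + Real.cos (μ k * τ - θ k) ≤ 2 - η := by linarith
  have hprodrest : ∏ k' ∈ Finset.univ.erase k, (1 + Real.cos (μ k' * τ - θ k')) ≤ 2^(m-1) := by
    calc ∏ k' ∈ Finset.univ.erase k, (1 + Real.cos (μ k' * τ - θ k'))
        ≤ ∏ _k' ∈ Finset.univ.erase k, (2:ℝ) := by
          refine Finset.prod_le_prod (fun k' _ => ?_) (fun k' _ => hFle τ k')
          nlinarith [Real.neg_one_le_cos (μ k' * τ - θ k')]
      _ = 2^(m-1) := by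
          rw [Finset.prod_const, Finset.card_erase_of_mem (Finset.mem_univ k),
            Finset.card_univ, Fintype.card_fin]
  have hFτle : F τ ≤ (2 - η) * 2^(m-1) := by
    simp only [hF]
    rw [← Finset.mul_prod_erase _ _ (Finset.mem_univ k)]
    refine mul_le_mul hfac hprodrest (Finset.prod_nonneg fun k' _ => by
      nlinarith [Real.neg_one_le_cos (μ k' * τ - θ k')]) (by linarith)
  have heq2 : (2 - η) * 2^(m-1) = 2^m * r := by
    obtain ⟨m', hm'⟩ : ∃ m', m = m' + 1 := ⟨m-1, (Nat.succ_pred_eq_of_pos hm).symm⟩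
    rw [hm', hr, Nat.add_sub_cancel, pow_succ]
    ring
  linarith

set_option maxHeartbeats 1000000 in
/-- If `f₁(t) = ∑ aⱼ e^{iλⱼ t}` and `f₂(t) = ∑ bⱼ e^{iλⱼ t}` are equivalent
trigonometric polynomials, then for every `ε > 0` there is a relatively dense set
of real `τ` with `|f₁(t+τ) − f₂(t)| < ε` for all `t ∈ ℝ`. -/
theorem finEquiv_translation_numbers_real {n : ℕ} (lam : Fin n → ℝ)
    (hinj : Function.Injective lam) (a b : Fin n → ℂ)
    (heq : FinEquiv lam a b) (ε : ℝ) (hε : 0 < ε) :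
    ∃ l > (0 : ℝ), ∀ x : ℝ, ∃ τ ∈ Set.Icc x (x + l),
      ∀ t : ℝ,
        ‖(∑ j, a j * Complex.exp (Complex.I * (lam j : ℂ) * ((t + τ : ℝ) : ℂ))) -
          ∑ j, b j * Complex.exp (Complex.I * (lam j : ℂ) * (t : ℂ))‖ < ε := by
  obtain ⟨ψ, hψ⟩ := heq
  have hfd : FiniteDimensional ℚ (Submodule.span ℚ (Set.range lam)) :=
    FiniteDimensional.span_of_finite ℚ (Set.finite_range lam)
  set m := Module.finrank ℚ (Submodule.span ℚ (Set.range lam)) with hm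
  set B : Module.Basis (Fin m) ℚ (Submodule.span ℚ (Set.range lam)) :=
    Module.finBasis ℚ (Submodule.span ℚ (Set.range lam)) with hB
  set elj : Fin n → (Submodule.span ℚ (Set.range lam)) :=
    fun j => ⟨lam j, Submodule.subset_span (Set.mem_range_self j)⟩ with helj
  set r : Fin n → Fin m → ℚ := fun j k => B.repr (elj j) k with hrdef
  have hr' : ∀ j k, B.repr (elj j) k = r j k := fun _ _ => rfl
  set q : ℕ := ∏ j, ∏ k, (r j k).den with hq
  have hqpos : 0 < q := by
    rw [hq]
    exact Finset.prod_pos fun j _ => Finset.prod_pos fun k _ => (r j k).pos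
  set c : Fin n → Fin m → ℤ := fun j k => (r j k).num * ((q / (r j k).den : ℕ) : ℤ)
    with hcdef
  have hrnum : ∀ ρ : ℚ, ρ * (ρ.den:ℚ) = (ρ.num:ℚ) := by
    intro ρ
    have h := Rat.num_div_den ρ
    have hd : ((ρ.den:ℚ)) ≠ 0 := by exact_mod_cast ρ.den_nz
    nth_rewrite 1 [← h]
    rw [div_mul_cancel₀ _ hd]
  have hc : ∀ j k, ((c j k : ℚ)) = r j k * q := by
    intro j k
    have hdvd : (r j k).den ∣ q := by
      rw [hq]
      exact dvd_trans (Finset.dvd_prod_of_mem (fun k' => (r j k').den) (Finset.mem_univ k))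
        (Finset.dvd_prod_of_mem (fun j' => ∏ k', (r j' k').den) (Finset.mem_univ j))
    have hqd : ((r j k).den : ℕ) * (q / (r j k).den) = q := Nat.mul_div_cancel' hdvd
    simp only [hcdef]
    have h1 : ((q:ℚ)) = ((r j k).den : ℚ) * ((q / (r j k).den : ℕ) : ℚ) := by
      rw [← Nat.cast_mul, hqd]
    rw [h1, ← mul_assoc, hrnum (r j k)]
    rw [Int.cast_mul, Int.cast_natCast]
  set μ : Fin m → ℝ := fun k => ((B k : ℝ)) / q with hμ
  set θ : Fin m → ℝ := fun k => ψ (((q:ℚ))⁻¹ • B k) with hθ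
  have hqR : ((q:ℝ)) ≠ 0 := by positivity
  have hrepr : ∀ j, (elj j : ℝ) = ∑ k, ((r j k : ℚ) : ℝ) * (B k : ℝ) := by
    intro j
    conv_lhs => rw [← B.sum_repr (elj j)]
    rw [AddSubmonoidClass.coe_finset_sum]
    refine Finset.sum_congr rfl fun k _ => ?_
    rw [hr', Submodule.coe_smul, Rat.smul_def]
  have hcR : ∀ j k, ((c j k : ℝ)) = ((r j k : ℚ):ℝ) * q := by
    intro j k
    exact_mod_cast congrArg (fun y : ℚ => (y : ℝ)) (hc j k)
  have hlam : ∀ j, lam j = ∑ k, (c j k : ℝ) * μ k := by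
    intro j
    have h1 : (elj j : ℝ) = lam j := rfl
    rw [← h1, hrepr j]
    refine Finset.sum_congr rfl fun k _ => ?_
    rw [hcR j k]
    simp only [hμ]
    field_simp
  have hpsi : ∀ j, (ψ (elj j) : ℝ) = ∑ k, (c j k : ℝ) * θ k := by
    intro j
    conv_lhs => rw [← B.sum_repr (elj j)]
    rw [map_sum]
    refine Finset.sum_congr rfl fun k _ => ?_
    rw [hr', map_smul, Rat.smul_def, hcR j k]
    simp only [hθ]
    rw [map_smul, Rat.smul_def]
    push_cast
    field_simp
  have hind : ∀ l : Fin m → ℤ, (∑ k, (l k : ℝ) * μ k) = 0 → l = 0 := by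
    intro l hl
    have h1 : ∑ k, (l k : ℝ) * (B k : ℝ) = 0 := by
      have h2 : (q:ℝ) * ∑ k, (l k : ℝ) * μ k = ∑ k, (l k : ℝ) * (B k : ℝ) := by
        rw [Finset.mul_sum]
        refine Finset.sum_congr rfl fun k _ => ?_
        simp only [hμ]
        field_simp
      rw [hl, mul_zero] at h2
      exact h2.symm
    have h3 : (∑ k, ((l k : ℚ)) • B k) = (0 : (Submodule.span ℚ (Set.range lam))) := by
      apply Subtype.coe_injective
      show ((∑ k, ((l k : ℚ)) • B k : (Submodule.span ℚ (Set.range lam))) : ℝ)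
        = ((0 : (Submodule.span ℚ (Set.range lam))) : ℝ)
      rw [AddSubmonoidClass.coe_finset_sum]
      rw [show ((0 : (Submodule.span ℚ (Set.range lam))) : ℝ) = 0 from rfl, ← h1]
      refine Finset.sum_congr rfl fun k _ => ?_
      rw [Submodule.coe_smul, Rat.smul_def]
      push_cast
      ring
    have h4 := Fintype.linearIndependent_iff.1 B.linearIndependent (fun k => (l k : ℚ)) h3
    funext k
    simp only [Pi.zero_apply]
    have h5 : ((l k : ℚ)) = 0 := h4 k
    exact_mod_cast h5
  set K : ℝ := ∑ j, ‖a j‖ * ∑ k, |(c j k : ℝ)| with hK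
  have hKnonneg : 0 ≤ K := by
    rw [hK]
    exact Finset.sum_nonneg fun j _ => mul_nonneg (norm_nonneg _)
      (Finset.sum_nonneg fun k _ => abs_nonneg _)
  set δ : ℝ := ε / (K + 1) with hδ
  have hδpos : 0 < δ := by rw [hδ]; positivity
  set η : ℝ := min (δ^2/2) 1 with hη
  have hηpos : 0 < η := by
    rw [hη]
    exact lt_min (by positivity) one_pos
  have hη2 : η < 2 := lt_of_le_of_lt (min_le_right _ _) one_lt_two
  obtain ⟨L, hL, hLprop⟩ := bohr_kronecker μ hind θ η hηpos hη2
  refine ⟨L, hL, fun x => ?_⟩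
  obtain ⟨τ, hτmem, hcos⟩ := hLprop x
  refine ⟨τ, hτmem, fun t => ?_⟩
  have hD : ∀ k, ‖Complex.exp (Complex.I * ((μ k * τ - θ k : ℝ):ℂ)) - 1‖ ≤ δ := by
    intro k
    have h1 := hcos k
    have h2 : ‖Complex.exp (Complex.I * ((μ k * τ - θ k : ℝ):ℂ)) - 1‖^2
        = 2 - 2 * Real.cos (μ k * τ - θ k) := normSq_exp_sub_one _
    have h3 : η ≤ δ^2/2 := min_le_left _ _
    have h4 : ‖Complex.exp (Complex.I * ((μ k * τ - θ k : ℝ):ℂ)) - 1‖^2 < δ^2 := by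
      rw [h2]; nlinarith
    exact le_of_lt (lt_of_pow_lt_pow_left₀ 2 hδpos.le h4)
  have hrw : (∑ j, a j * Complex.exp (Complex.I * (lam j : ℂ) * ((t + τ : ℝ) : ℂ))) -
          ∑ j, b j * Complex.exp (Complex.I * (lam j : ℂ) * (t : ℂ))
      = ∑ j, (a j * Complex.exp (Complex.I * (lam j : ℂ) * (t:ℂ))
            * Complex.exp (Complex.I * ((ψ (elj j) : ℝ):ℂ)))
          * (Complex.exp (Complex.I * ((lam j * τ - ψ (elj j) : ℝ):ℂ)) - 1) := by
    rw [← Finset.sum_sub_distrib]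
    refine Finset.sum_congr rfl fun j _ => ?_
    rw [hψ j]
    have hel : (⟨lam j, Submodule.subset_span (Set.mem_range_self j)⟩ :
        (Submodule.span ℚ (Set.range lam))) = elj j := rfl
    rw [hel]
    have h3 : Complex.exp (Complex.I * (lam j : ℂ) * ((t + τ : ℝ):ℂ))
        = Complex.exp (Complex.I * (lam j : ℂ) * (t:ℂ))
          * Complex.exp (Complex.I * ((ψ (elj j) : ℝ):ℂ))
          * Complex.exp (Complex.I * ((lam j * τ - ψ (elj j) : ℝ):ℂ)) := by
      rw [← Complex.exp_add, ← Complex.exp_add]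
      congr 1
      push_cast
      ring
    rw [h3]
    ring
  rw [hrw]
  have hunit : ∀ y : ℝ, ‖Complex.exp (Complex.I * (y:ℂ))‖ = 1 := by
    intro y
    rw [Complex.norm_exp]
    simp
  calc ‖∑ j, (a j * Complex.exp (Complex.I * (lam j : ℂ) * (t:ℂ))
            * Complex.exp (Complex.I * ((ψ (elj j) : ℝ):ℂ)))
          * (Complex.exp (Complex.I * ((lam j * τ - ψ (elj j) : ℝ):ℂ)) - 1)‖
      ≤ ∑ j, ‖(a j * Complex.exp (Complex.I * (lam j : ℂ) * (t:ℂ))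
            * Complex.exp (Complex.I * ((ψ (elj j) : ℝ):ℂ)))
          * (Complex.exp (Complex.I * ((lam j * τ - ψ (elj j) : ℝ):ℂ)) - 1)‖ :=
        norm_sum_le _ _
    _ ≤ ∑ j, ‖a j‖ * ((∑ k, |(c j k : ℝ)|) * δ) := by
        refine Finset.sum_le_sum fun j _ => ?_
        rw [norm_mul, norm_mul, norm_mul]
        have hu1 : ‖Complex.exp (Complex.I * (lam j : ℂ) * (t:ℂ))‖ = 1 := by
          rw [show Complex.I * (lam j : ℂ) * (t:ℂ) = Complex.I * ((lam j * t : ℝ):ℂ) by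
            push_cast; ring]
          exact hunit _
        rw [hu1, hunit (ψ (elj j)), mul_one, mul_one]
        refine mul_le_mul_of_nonneg_left ?_ (norm_nonneg _)
        have harg : (lam j * τ - (ψ (elj j) : ℝ) : ℝ)
            = ∑ k, (c j k : ℝ) * (μ k * τ - θ k) := by
          rw [hpsi j]
          conv_lhs => rw [hlam j]
          rw [Finset.sum_mul, ← Finset.sum_sub_distrib]
          exact Finset.sum_congr rfl fun k _ => by ring
        rw [harg]
        refine le_trans (eN_sum Finset.univ (c j) (fun k => μ k * τ - θ k)) ?_
        rw [Finset.sum_mul]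
        exact Finset.sum_le_sum fun k _ =>
          mul_le_mul_of_nonneg_left (hD k) (abs_nonneg _)
    _ = K * δ := by rw [hK, Finset.sum_mul]; exact Finset.sum_congr rfl fun j _ => by ring
    _ < ε := by
        rw [hδ, mul_div_assoc', div_lt_iff₀ (by positivity : (0:ℝ) < K+1)]
        nlinarith
end
end

section
/- For a finite set of exponents Λ = {λ₁,...,λₙ}, each equivalence class of trigonometric polynomials P(t) = Σ_{j=1}^n a_j e^{iλ_j t} under the Bohr equivalence relation is sequentially compact with respect to the topology of uniform convergence on ℝ: every sequence of pairwise equivalent trigonometric polynomials with frequencies in Λ has a subsequence converging uniformly on ℝ to a trigonometric polynomial in the same equivalence class. -/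
noncomputable section

open Filter Complex Topology

lemma den_dvd_int (q : ℚ) (d : ℕ) (h : q.den ∣ d) : ∃ p : ℤ, (q * (d : ℚ)) = (p : ℚ) := by
  obtain ⟨c, hc⟩ := h
  refine ⟨q.num * c, ?_⟩
  have : (d : ℚ) = (q.den : ℚ) * (c : ℚ) := by exact_mod_cast congrArg (Nat.cast : ℕ → ℚ) hc
  rw [this, ← mul_assoc, Rat.mul_den_eq_num]
  push_cast
  ring

lemma exp_I_eq_of_sub_eq (x y : ℝ) (M : ℤ) (h : x - y = 2 * Real.pi * M) :
    Complex.exp (Complex.I * x) = Complex.exp (Complex.I * y) := by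
  have hx : (x : ℂ) = (y : ℂ) + 2 * Real.pi * M := by
    have := congrArg (Complex.ofReal) h
    push_cast at this ⊢
    linear_combination this
  rw [hx]
  have : Complex.I * ((y : ℂ) + 2 * Real.pi * M) =
      Complex.I * y + M * (2 * Real.pi * Complex.I) := by ring
  rw [this, Complex.exp_add, Complex.exp_int_mul_two_pi_mul_I, mul_one]

/-- Each Bohr equivalence class of trigonometric polynomials with frequencies in a
finite set `Λ` is sequentially compact for uniform convergence on `ℝ`: every
sequence of pairwise equivalent trigonometric polynomials has a subsequence
converging uniformly on `ℝ` to a trigonometric polynomial in the same class. -/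
theorem finEquiv_class_seqCompact {n : ℕ} (lam : Fin n → ℝ)
    (hinj : Function.Injective lam) (A : ℕ → Fin n → ℂ)
    (hequiv : ∀ l m : ℕ, FinEquiv lam (A l) (A m)) :
    ∃ φ : ℕ → ℕ, StrictMono φ ∧ ∃ c : Fin n → ℂ, FinEquiv lam (A 0) c ∧
      TendstoUniformly
        (fun m (t : ℝ) => ∑ j, A (φ m) j * Complex.exp (Complex.I * (lam j : ℂ) * (t : ℂ)))
        (fun t : ℝ => ∑ j, c j * Complex.exp (Complex.I * (lam j : ℂ) * (t : ℂ)))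
        Filter.atTop := by
  classical
  haveI : FiniteDimensional ℚ (Submodule.span ℚ (Set.range lam)) :=
    FiniteDimensional.span_of_finite ℚ (Set.finite_range lam)
  set V := Submodule.span ℚ (Set.range lam) with hV
  set k := Module.finrank ℚ V with hk
  let β : Module.Basis (Fin k) ℚ V := Module.finBasis ℚ V
  let e : Fin n → V := fun j => ⟨lam j, Submodule.subset_span (Set.mem_range_self j)⟩
  let q : Fin n → Fin k → ℚ := fun j i => β.repr (e j) i
  choose Ψ hΨ using fun m => hequiv 0 m
  -- common denominator
  let D : ℕ := ∏ j, ∏ i, (q j i).den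
  have hDpos : 0 < D :=
    Finset.prod_pos fun j _ => Finset.prod_pos fun i _ => (q j i).pos
  have hden : ∀ j i, (q j i).den ∣ D := fun j i =>
    dvd_trans (Finset.dvd_prod_of_mem (fun i => (q j i).den) (Finset.mem_univ i))
      (Finset.dvd_prod_of_mem (fun j => ∏ i, (q j i).den) (Finset.mem_univ j))
  choose p hp using fun j i => den_dvd_int (q j i) D (hden j i)
  set P : ℝ := 2 * Real.pi * D with hP
  have hPpos : 0 < P := by positivity
  -- representatives mod P
  let s : ℕ → Fin k → ℝ := fun m i => Int.fract (Ψ m (β i) / P) * P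
  have hs_mem : ∀ m, s m ∈ Set.univ.pi fun _ : Fin k => Set.Icc (0:ℝ) P := by
    intro m i _
    constructor
    · exact mul_nonneg (Int.fract_nonneg _) hPpos.le
    · exact mul_le_of_le_one_left hPpos.le (Int.fract_lt_one _).le
  have hs_sub : ∀ m i, ∃ N : ℤ, Ψ m (β i) - s m i = N * P := by
    intro m i
    refine ⟨⌊Ψ m (β i) / P⌋, ?_⟩
    have := Int.self_sub_fract (Ψ m (β i) / P)
    field_simp [s]
    linarith [congrArg (· * P) this,
      (div_mul_cancel₀ (Ψ m (β i)) hPpos.ne' : Ψ m (β i) / P * P = Ψ m (β i))]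
  -- key congruence: exp of χ (e j) only depends on residues
  have key : ∀ (χ : V →ₗ[ℚ] ℝ) (r : Fin k → ℝ),
      (∀ i, ∃ N : ℤ, χ (β i) - r i = N * P) →
      ∀ j, Complex.exp (Complex.I * (χ (e j) : ℝ)) =
        Complex.exp (Complex.I * ((∑ i, (q j i : ℝ) * r i : ℝ) : ℂ)) := by
    intro χ r hr j
    choose N hN using hr
    refine exp_I_eq_of_sub_eq _ _ (∑ i, p j i * N i) ?_
    have hχ : χ (e j) = ∑ i, (q j i : ℝ) * χ (β i) := by
      conv_lhs => rw [← β.sum_repr (e j)]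
      rw [map_sum]
      exact Finset.sum_congr rfl fun i _ => by
        rw [map_smul, Rat.smul_def]
    rw [hχ, ← Finset.sum_sub_distrib]
    push_cast
    rw [Finset.mul_sum]
    refine Finset.sum_congr rfl fun i _ => ?_
    have h1 : (q j i : ℝ) * χ (β i) - (q j i : ℝ) * r i = (q j i : ℝ) * (N i * P) := by
      rw [← mul_sub, hN i]
    have h2 : ((q j i : ℝ)) * (D : ℝ) = (p j i : ℝ) := by exact_mod_cast congrArg (Rat.cast : ℚ → ℝ) (hp j i)
    rw [h1, hP]
    linear_combination (2 * Real.pi * (N i : ℝ)) * h2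
  -- extract convergent subsequence of the residues
  obtain ⟨θ, -, φ, hφ, hconv⟩ :=
    (isCompact_univ_pi fun _ : Fin k => isCompact_Icc).tendsto_subseq hs_mem
  have hconv' : ∀ i, Tendsto (fun m => s (φ m) i) atTop (𝓝 (θ i)) := by
    intro i
    exact (tendsto_pi_nhds.mp hconv) i
  -- the limit linear map and coefficients
  let ψ : V →ₗ[ℚ] ℝ := β.constr ℚ θ
  have hψβ : ∀ i, ψ (β i) = θ i := fun i => β.constr_basis ℚ θ i
  let c : Fin n → ℂ := fun j => A 0 j * Complex.exp (Complex.I * (ψ (e j) : ℝ))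
  -- coefficientwise convergence
  have hcoef : ∀ j, Tendsto (fun m => A (φ m) j) atTop (𝓝 (c j)) := by
    intro j
    have hrepr : ∀ m, A (φ m) j =
        A 0 j * Complex.exp (Complex.I * ((∑ i, (q j i : ℝ) * s (φ m) i : ℝ) : ℂ)) := by
      intro m
      rw [hΨ (φ m) j]
      congr 1
      exact key (Ψ (φ m)) (s (φ m)) (hs_sub (φ m)) j
    have hlim : c j =
        A 0 j * Complex.exp (Complex.I * ((∑ i, (q j i : ℝ) * θ i : ℝ) : ℂ)) := by
      show A 0 j * _ = _
      congr 1
      exact key ψ θ (fun i => ⟨0, by rw [hψβ i]; ring⟩) j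
    simp only [hrepr, hlim]
    have hsum : Tendsto (fun m => ∑ i, (q j i : ℝ) * s (φ m) i) atTop
        (𝓝 (∑ i, (q j i : ℝ) * θ i)) :=
      tendsto_finset_sum _ fun i _ => (hconv' i).const_mul _
    have hcont : Continuous fun x : ℝ => A 0 j * Complex.exp (Complex.I * (x : ℂ)) :=
      continuous_const.mul (Complex.continuous_exp.comp
        (continuous_const.mul Complex.continuous_ofReal))
    exact (hcont.tendsto _).comp hsum
  refine ⟨φ, hφ, c, ⟨ψ, fun j => rfl⟩, ?_⟩
  -- uniform convergence from coefficient convergence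
  have hsum0 : Tendsto (fun m => ∑ j, ‖c j - A (φ m) j‖) atTop (𝓝 0) := by
    have : Tendsto (fun m => ∑ j, ‖c j - A (φ m) j‖) atTop (𝓝 (∑ j : Fin n, (0:ℝ))) :=
      tendsto_finset_sum _ fun j _ => by
        have : Tendsto (fun m => c j - A (φ m) j) atTop (𝓝 0) := by
          have := ((tendsto_const_nhds : Tendsto (fun _ : ℕ => c j) atTop (𝓝 (c j))).sub (hcoef j))
          simpa using this
        simpa using this.norm
    simpa using this
  rw [Metric.tendstoUniformly_iff]
  intro ε hε
  filter_upwards [hsum0.eventually_lt_const hε] with m hm t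
  have hnorm : ∀ j, ‖Complex.exp (Complex.I * (lam j : ℂ) * (t : ℂ))‖ = 1 := by
    intro j
    have harg : Complex.I * (lam j : ℂ) * (t : ℂ) = ((lam j * t : ℝ) : ℂ) * Complex.I := by
      push_cast; ring
    rw [harg, Complex.norm_exp_ofReal_mul_I]
  calc dist (∑ j, c j * Complex.exp (Complex.I * (lam j : ℂ) * (t : ℂ)))
        (∑ j, A (φ m) j * Complex.exp (Complex.I * (lam j : ℂ) * (t : ℂ)))
      = ‖∑ j, (c j - A (φ m) j) * Complex.exp (Complex.I * (lam j : ℂ) * (t : ℂ))‖ := by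
        rw [dist_eq_norm, ← Finset.sum_sub_distrib]
        congr 1
        exact Finset.sum_congr rfl fun j _ => by ring
    _ ≤ ∑ j, ‖(c j - A (φ m) j) * Complex.exp (Complex.I * (lam j : ℂ) * (t : ℂ))‖ :=
        norm_sum_le _ _
    _ = ∑ j, ‖c j - A (φ m) j‖ := by
        refine Finset.sum_congr rfl fun j _ => ?_
        rw [norm_mul, hnorm j, mul_one]
    _ < ε := hm
end
end
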